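/- Let 𝒳 be a 1-dimensional trajectory set, and let 𝒩 = {X ∈ 𝒳 : ∃ j ≥ 0 such that (X,j) is an arbitrage node and X_{j+1} ≠ X_j}. Then 𝒩 is a null set, i.e. Ī_0(1_𝒩) = 0. -/

import Mathlib

open scoped InnerProductSpace ENNReal
open Finset

namespace Traj

variable {E : Type*} [NormedAddCommGroup E] [InnerProductSpace ℝ E]

/-- A trajectory set: a nonempty set of sequences sharing a common initial value. -/
def IsTrajectorySet (T : Set (ℕ → E)) (x0 : E) : Prop :=
  T.Nonempty ∧ ∀ X ∈ T, X 0 = x0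

/-- The conditional trajectory set at the node `(X, k)`. -/
def condSet (T : Set (ℕ → E)) (X : ℕ → E) (k : ℕ) : Set (ℕ → E) :=
  {Y | Y ∈ T ∧ ∀ i ≤ k, Y i = X i}

/-- Non-anticipativity of a family `(G i)_{i ≥ j}` of functions on the conditional set. -/
def NonAnticipative (T : Set (ℕ → E)) (X : ℕ → E) (j : ℕ)
    {F : Type*} (G : ℕ → (ℕ → E) → F) : Prop :=
  ∀ i, j ≤ i → ∀ Y ∈ condSet T X j, ∀ Z ∈ condSet T X j,
    (∀ k, j ≤ k → k ≤ i → Y k = Z k) → G i Y = G i Z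

/-- The simple portfolio payoff `Π^{V,H}_{j,n}`. -/
noncomputable def piPort (H : ℕ → (ℕ → E) → E) (j n : ℕ) (V : ℝ) (Y : ℕ → E) : ℝ :=
  V + ∑ i ∈ Finset.Ico j n, ⟪H i Y, Y (i + 1) - Y i⟫_ℝ

/-- The total initial cost `Σ_{m ≥ 0} V^m` of a generalized portfolio (`V^m ≥ 0` for `m ≥ 1`). -/
noncomputable def SuperhedgeCost (V : ℕ → ℝ) : EReal :=
  (V 0 : EReal) + ((∑' m : ℕ, ENNReal.ofReal (V (m + 1)) : ℝ≥0∞) : EReal)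

/-- `(V, H, n)` is a generalized superhedge of `f` at node `(X, j)`: `f_0 = Π^{V⁰,H⁰}_{j,n₀}`
and, for `m ≥ 1`, `f_m = Π^{Vᵐ,Hᵐ}_{j,n_m}` with `Π^{Vᵐ,Hᵐ}_{j,n} ≥ 0` for all `n ≥ j`,
and `f ≤ Σ_{m ≥ 0} f_m` on the conditional set. -/
def IsSuperhedge (T : Set (ℕ → E)) (X : ℕ → E) (j : ℕ) (f : (ℕ → E) → EReal)
    (V : ℕ → ℝ) (H : ℕ → ℕ → (ℕ → E) → E) (n : ℕ → ℕ) : Prop :=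
  (∀ m, NonAnticipative T X j (H m)) ∧ (∀ m, j ≤ n m) ∧
  (∀ m, 1 ≤ m → ∀ k, j ≤ k → ∀ Y ∈ condSet T X j, 0 ≤ piPort (H m) j k (V m) Y) ∧
  (∀ Y ∈ condSet T X j,
    f Y ≤ (piPort (H 0) j (n 0) (V 0) Y : EReal)
      + ((∑' m : ℕ, ENNReal.ofReal (piPort (H (m + 1)) j (n (m + 1)) (V (m + 1)) Y) :
          ℝ≥0∞) : EReal))

/-- The conditional superhedging operator `σ̄_j f (X)`. -/
noncomputable def sigmaUp (T : Set (ℕ → E)) (X : ℕ → E) (j : ℕ)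
    (f : (ℕ → E) → EReal) : EReal :=
  sInf {c : EReal | ∃ V H n, IsSuperhedge T X j f V H n ∧ c = SuperhedgeCost V}

/-- The conditional underhedging operator `σ̲_j f = -σ̄_j (-f)`. -/
noncomputable def sigmaDown (T : Set (ℕ → E)) (X : ℕ → E) (j : ℕ)
    (f : (ℕ → E) → EReal) : EReal :=
  - sigmaUp T X j (fun Y => - f Y)

/-- Hedge data for the conditional norm operator: all portfolios are nonnegative. -/
def IsNormHedge (T : Set (ℕ → E)) (X : ℕ → E) (j : ℕ) (f : (ℕ → E) → ℝ≥0∞)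
    (V : ℕ → ℝ) (H : ℕ → ℕ → (ℕ → E) → E) (n : ℕ → ℕ) : Prop :=
  (∀ m, NonAnticipative T X j (H m)) ∧ (∀ m, j ≤ n m) ∧
  (∀ m, ∀ k, j ≤ k → ∀ Y ∈ condSet T X j, 0 ≤ piPort (H m) j k (V m) Y) ∧
  (∀ Y ∈ condSet T X j,
    f Y ≤ ∑' m : ℕ, ENNReal.ofReal (piPort (H m) j (n m) (V m) Y))

/-- The conditional norm operator `Ī_j f (X)` (for nonnegative extended-real `f`). -/
noncomputable def Ibar (T : Set (ℕ → E)) (X : ℕ → E) (j : ℕ)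
    (f : (ℕ → E) → ℝ≥0∞) : ℝ≥0∞ :=
  sInf {c : ℝ≥0∞ | ∃ V H n, IsNormHedge T X j f V H n ∧
    c = ∑' m : ℕ, ENNReal.ofReal (V m)}

/-- `A` is conditionally null at the node `(X, j)`. -/
def NullAt (T : Set (ℕ → E)) (X : ℕ → E) (j : ℕ) (A : Set (ℕ → E)) : Prop :=
  Ibar T X j (A.indicator fun _ => (1 : ℝ≥0∞)) = 0

/-- `A` is a (global) null set. -/
def IsNull (T : Set (ℕ → E)) (A : Set (ℕ → E)) : Prop :=
  ∀ X ∈ T, NullAt T X 0 A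

/-- Property `(L_{(X,j)})`. -/
def PropertyL (T : Set (ℕ → E)) (X : ℕ → E) (j : ℕ) : Prop :=
  ∀ V H n, IsSuperhedge T X j (fun _ => (0 : EReal)) V H n →
    (0 : EReal) ≤ SuperhedgeCost V

/-- `(X, k)` is an arbitrage-free node. -/
def ArbitrageFreeNode (T : Set (ℕ → E)) (X : ℕ → E) (k : ℕ) : Prop :=
  ∀ h : E, (∀ Y ∈ condSet T X k, ⟪h, Y (k + 1) - Y k⟫_ℝ = 0) ∨
    (⨅ Y ∈ condSet T X k, ((⟪h, Y (k + 1) - Y k⟫_ℝ : ℝ) : EReal)) < 0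

/-- The set `𝒩` of trajectories passing (non-constantly) through an arbitrage node. -/
def arbNull (T : Set (ℕ → E)) : Set (ℕ → E) :=
  {X | X ∈ T ∧ ∃ j : ℕ, ¬ ArbitrageFreeNode T X j ∧ X (j + 1) ≠ X j}

/-- Property `(L)`-a.e. -/
def LaeHolds (T : Set (ℕ → E)) : Prop :=
  (∀ X ∈ T \ arbNull T, ∀ k, 1 ≤ k → PropertyL T X k) ∧
  (∀ X ∈ T, PropertyL T X 0)

/-- A bounded non-anticipative stopping rule. -/
def BoundedStoppingRule (T : Set (ℕ → E)) (N : (ℕ → E) → ℕ) : Prop :=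
  (∃ nstar, ∀ X ∈ T, N X ≤ nstar) ∧
  (∀ k : ℕ, ∀ X ∈ T, ∀ Y ∈ T, (∀ i ≤ k, X i = Y i) → (N X ≤ k ↔ N Y ≤ k))

end Traj

namespace Traj

open Classical in
/-- Choice of an arbitrage witness at a node given by the conditional set `S` and time `k`. -/
noncomputable def pick (S : Set (ℕ → ℝ)) (k : ℕ) : ℝ :=
  if hh : ∃ h : ℝ, (∀ Z ∈ S, 0 ≤ h * (Z (k + 1) - Z k)) ∧
      ∃ Z ∈ S, h * (Z (k + 1) - Z k) ≠ 0
  then hh.choose else 0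

lemma pick_nonneg (S : Set (ℕ → ℝ)) (k : ℕ) {Y : ℕ → ℝ} (hY : Y ∈ S) :
    0 ≤ pick S k * (Y (k + 1) - Y k) := by
  unfold pick
  split_ifs with hh
  · exact hh.choose_spec.1 Y hY
  · simp

lemma piPort_pickfam (T : Set (ℕ → ℝ)) (m k : ℕ) (Y : ℕ → ℝ) :
    piPort (fun i Y => if i = (Nat.unpair m).1 then
        (((Nat.unpair m).2 : ℝ) + 1) * pick (condSet T Y i) i else 0) 0 k 0 Y
      = if (Nat.unpair m).1 < k then
          (((Nat.unpair m).2 : ℝ) + 1) * pick (condSet T Y (Nat.unpair m).1) (Nat.unpair m).1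
            * (Y ((Nat.unpair m).1 + 1) - Y (Nat.unpair m).1)
        else 0 := by
  set j := (Nat.unpair m).1
  have : ∀ i : ℕ, (⟪(if i = j then (((Nat.unpair m).2 : ℝ) + 1) * pick (condSet T Y i) i else 0),
      Y (i + 1) - Y i⟫_ℝ)
      = if i = j then (((Nat.unpair m).2 : ℝ) + 1) * pick (condSet T Y j) j
          * (Y (j + 1) - Y j) else 0 := by
    intro i
    by_cases hij : i = j <;> simp [hij] <;> ring
  simp only [piPort, this, Finset.sum_ite_eq' (Finset.Ico 0 k) j, zero_add,
    Finset.mem_Ico, Nat.zero_le, true_and]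

/-- the set `𝒩` of trajectories passing (non-constantly) through an arbitrage node
is a null set. -/
theorem arbNull_isNull
    (T : Set (ℕ → ℝ)) (x0 : ℝ) (hT : IsTrajectorySet T x0) :
    IsNull T (arbNull T) := by
  classical
  intro X hX
  set Hfam : ℕ → ℕ → (ℕ → ℝ) → ℝ := fun m i Y =>
    if i = (Nat.unpair m).1 then (((Nat.unpair m).2 : ℝ) + 1) * pick (condSet T Y i) i else 0
    with hHfam
  have key : IsNormHedge T X 0 ((arbNull T).indicator fun _ => (1 : ℝ≥0∞))
      (fun _ => 0) Hfam (fun m => (Nat.unpair m).1 + 1) := by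
    refine ⟨?_, fun m => Nat.zero_le _, ?_, ?_⟩
    · -- non-anticipativity
      intro m i _ Y hY Z hZ hag
      simp only [hHfam]
      by_cases hij : i = (Nat.unpair m).1
      · have hS : condSet T Y i = condSet T Z i := by
          ext W
          constructor <;> rintro ⟨hW, hpre⟩ <;> refine ⟨hW, fun l hl => ?_⟩
          · rw [hpre l hl, hag l (Nat.zero_le _) hl]
          · rw [hpre l hl, hag l (Nat.zero_le _) hl]
        rw [hS]
      · simp [hij]
    · -- nonnegativity
      intro m k _ Y hY
      rw [piPort_pickfam]
      split_ifs with h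
      · have := pick_nonneg (condSet T Y (Nat.unpair m).1) (Nat.unpair m).1
          (Y := Y) ⟨hY.1, fun _ _ => rfl⟩
        have h1 : (0:ℝ) ≤ ((Nat.unpair m).2 : ℝ) + 1 := by positivity
        calc (0:ℝ) ≤ (((Nat.unpair m).2 : ℝ) + 1) *
            (pick (condSet T Y (Nat.unpair m).1) (Nat.unpair m).1
              * (Y ((Nat.unpair m).1 + 1) - Y (Nat.unpair m).1)) := by positivity
          _ = _ := by ring
      · exact le_rfl
    · -- superhedging
      intro Y hY
      by_cases hmem : Y ∈ arbNull T
      · obtain ⟨hYT, j, hAF, hne⟩ := hmem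
        -- extract witness
        have hex : ∃ h : ℝ, (∀ Z ∈ condSet T Y j, 0 ≤ h * (Z (j + 1) - Z j)) ∧
            ∃ Z ∈ condSet T Y j, h * (Z (j + 1) - Z j) ≠ 0 := by
          rw [ArbitrageFreeNode] at hAF
          push_neg at hAF
          obtain ⟨h, h1, h2⟩ := hAF
          refine ⟨h, ?_, ?_⟩
          · intro Z hZ
            have hle : (⨅ W ∈ condSet T Y j, ((⟪h, W (j + 1) - W j⟫_ℝ : ℝ) : EReal))
                ≤ ((h * (Z (j + 1) - Z j) : ℝ) : EReal) := by
              have := biInf_le (fun W : ℕ → ℝ => ((⟪h, W (j + 1) - W j⟫_ℝ : ℝ) : EReal)) hZ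
              rwa [Real.inner_apply] at this
            have := le_trans h2 hle
            exact_mod_cast this
          · simpa only [Real.inner_apply] using h1
        have hpick : pick (condSet T Y j) j = hex.choose := by
          rw [pick, dif_pos hex]
        set h0 := pick (condSet T Y j) j with hh0
        have hYmem : Y ∈ condSet T Y j := ⟨hYT, fun _ _ => rfl⟩
        have h0nonneg : 0 ≤ h0 * (Y (j + 1) - Y j) := pick_nonneg _ _ hYmem
        have h0ne : h0 ≠ 0 := by
          have hspec := hex.choose_spec
          rw [← hpick] at hspec
          obtain ⟨Z, hZ, hZne⟩ := hspec.2
          intro h0z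
          exact hZne (by rw [h0z, zero_mul])
        have hpos : 0 < h0 * (Y (j + 1) - Y j) :=
          lt_of_le_of_ne h0nonneg (Ne.symm (mul_ne_zero h0ne (sub_ne_zero.mpr hne)))
        set c0 := h0 * (Y (j + 1) - Y j) with hc0
        set m0 := Nat.pair j ⌈1 / c0⌉₊ with hm0
        have hub : (1:ℝ≥0∞) ≤ ENNReal.ofReal
            (piPort (Hfam m0) 0 ((Nat.unpair m0).1 + 1) 0 Y) := by
          rw [hHfam, piPort_pickfam, hm0, Nat.unpair_pair]
          rw [if_pos (Nat.lt_succ_self j)]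
          rw [ENNReal.one_le_ofReal]
          have hceil : 1 / c0 ≤ (⌈1 / c0⌉₊ : ℝ) := Nat.le_ceil _
          have : 1 / c0 * c0 ≤ ((⌈1 / c0⌉₊ : ℝ) + 1) * c0 := by
            apply mul_le_mul_of_nonneg_right _ hpos.le
            linarith
          rw [one_div_mul_cancel hpos.ne'] at this
          calc (1:ℝ) ≤ ((⌈1 / c0⌉₊ : ℝ) + 1) * c0 := this
            _ = ((⌈1 / c0⌉₊ : ℝ) + 1) * h0 * (Y (j + 1) - Y j) := by rw [hc0]; ring
        calc ((arbNull T).indicator (fun _ => (1:ℝ≥0∞)) Y) ≤ 1 := by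
              simp [Set.indicator_apply]; split_ifs <;> simp
          _ ≤ ENNReal.ofReal (piPort (Hfam m0) 0 ((Nat.unpair m0).1 + 1) 0 Y) := hub
          _ ≤ ∑' m : ℕ, ENNReal.ofReal (piPort (Hfam m) 0 ((Nat.unpair m).1 + 1) 0 Y) :=
              ENNReal.le_tsum m0
      · simp [Set.indicator_of_notMem hmem]
  have h0mem : (0:ℝ≥0∞) ∈ {c : ℝ≥0∞ | ∃ V H n,
      IsNormHedge T X 0 ((arbNull T).indicator fun _ => (1:ℝ≥0∞)) V H n ∧
      c = ∑' m : ℕ, ENNReal.ofReal (V m)} := by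
    exact ⟨fun _ => 0, Hfam, fun m => (Nat.unpair m).1 + 1, key, by simp⟩
  rw [NullAt, Ibar]
  exact le_antisymm (sInf_le h0mem) bot_le


end Traj
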